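/- Let x : ℝ → ℝ³ be a curve lying on an oriented surface S in Minkowski 3-space, parametrized by arc length, with Darboux frame (T, g, n) where both S and x are timelike, satisfying T' = k_g·g - k_n·n, g' = k_g·T + τ_g·n, n' = k_n·T + τ_g·g. If x₁ : ℝ → ℝ³ is another curve with Darboux frame (T₁, g₁, n₁) and x(s₁) = x₁(s₁) + λ(s₁)·n₁(s₁) for a smooth function λ, and if at every point the vector g(s₁) is parallel to n₁(s₁), then λ' = 0, i.e. λ is constant. -/
import Mathlib


noncomputable section

open Real

/-- Minkowski inner product on ℝ³: ⟨u,v⟩ = -u₁v₁ + u₂v₂ + u₃v₃. -/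
def mink (u v : Fin 3 → ℝ) : ℝ := -(u 0 * v 0) + u 1 * v 1 + u 2 * v 2

/-- Lorentzian cross product on Minkowski 3-space. -/
def lcross (u v : Fin 3 → ℝ) : Fin 3 → ℝ :=
  ![u 1 * v 2 - u 2 * v 1, u 0 * v 2 - u 2 * v 0, u 1 * v 0 - u 0 * v 1]


lemma mink_smul (a : ℝ) (u v : Fin 3 → ℝ) : mink (a • u) v = a * mink u v := by
  simp [mink]; ring

lemma mink_add (u v w : Fin 3 → ℝ) : mink (u + v) w = mink u w + mink v w := by
  simp [mink]; ring

/-- If x = x₁ + λ·n₁ with the Darboux frame vector g of x parallel to n₁,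
then λ is constant (λ' = 0).  Everything is parametrized by the arc length s₁ of x₁;
x has arc length s with ds/ds₁ = σ. -/
theorem mannheim_lambda_constant
    (x x₁ T T₁ g g₁ n n₁ : ℝ → Fin 3 → ℝ)
    (lam kg kn τg kn₁ τg₁ σ : ℝ → ℝ)
    (hx : ∀ s, x s = x₁ s + lam s • n₁ s)
    (hlam : Differentiable ℝ lam)
    -- Darboux frame of x₁ (derivatives w.r.t. s₁)
    (hx₁d : ∀ s, HasDerivAt x₁ (T₁ s) s)
    (hn₁d : ∀ s, HasDerivAt n₁ (kn₁ s • T₁ s + τg₁ s • g₁ s) s)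
    -- Darboux frame of x (timelike curve on a timelike surface), chain rule with σ = ds/ds₁
    (hxd : ∀ s, HasDerivAt x (σ s • T s) s)
    (hTd : ∀ s, HasDerivAt T (σ s • (kg s • g s - kn s • n s)) s)
    (hgd : ∀ s, HasDerivAt g (σ s • (kg s • T s + τg s • n s)) s)
    (hnd : ∀ s, HasDerivAt n (σ s • (kn s • T s + τg s • g s)) s)
    -- metric relations
    (hTg : ∀ s, mink (T s) (g s) = 0)
    (hTT : ∀ s, mink (T s) (T s) = -1)
    (hgg : ∀ s, mink (g s) (g s) = 1)
    (hnn : ∀ s, mink (n s) (n s) = 1)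
    (hT₁n₁ : ∀ s, mink (T₁ s) (n₁ s) = 0)
    (hg₁n₁ : ∀ s, mink (g₁ s) (n₁ s) = 0)
    (hn₁n₁ : ∀ s, mink (n₁ s) (n₁ s) = 1)
    -- g is parallel to n₁ at every point
    (hpar : ∀ s, ∃ c : ℝ, c ≠ 0 ∧ g s = c • n₁ s) :
    ∀ s, deriv lam s = 0 := by
  intro s
  obtain ⟨c, hc, hg⟩ := hpar s
  have hTn₁ : mink (T s) (n₁ s) = 0 := by
    have h := hTg s
    rw [hg, ] at h
    have : mink (T s) (c • n₁ s) = c * mink (T s) (n₁ s) := by simp [mink]; ring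
    rw [this] at h
    exact (mul_eq_zero.mp h).resolve_left hc
  have hd2 : HasDerivAt x (T₁ s + (lam s • (kn₁ s • T₁ s + τg₁ s • g₁ s)
      + deriv lam s • n₁ s)) s := by
    have h := (hx₁d s).add (((hlam s).hasDerivAt).smul (hn₁d s))
    exact h.congr_of_eventuallyEq (Filter.Eventually.of_forall hx)
  have heq := (hxd s).unique hd2
  have key := congrArg (fun u => mink u (n₁ s)) heq
  simp only [mink_add, mink_smul] at key
  rw [hT₁n₁, hg₁n₁, hn₁n₁, hTn₁] at key
  linarith [key]
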